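/- Let s ≥ 1 be an integer and η > 0, and let L_{s,η} = (1+ω₀)/ω₁. Then the maximum of |B_s(ξ)| over ξ ∈ [−L_{s,η}, 0] equals 1; in particular |B_s(ξ)| ≤ 1 for every ξ ∈ [−L_{s,η}, 0]. -/

import Mathlib

open Polynomial Matrix

noncomputable section

/-- The degree-`n` Chebyshev polynomial of the first kind over `ℝ`,
characterized by `T_n (cos θ) = cos (n θ)`. -/
def chebT (n : ℕ) : Polynomial ℝ := Polynomial.Chebyshev.T ℝ (n : ℤ)

/-- `ω₀ = 1 + η / s²`. -/
def omega0 (s : ℕ) (η : ℝ) : ℝ := 1 + η / (s : ℝ) ^ 2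

/-- `ω₁ = T_s(ω₀) / T_s'(ω₀)`. -/
def omega1 (s : ℕ) (η : ℝ) : ℝ :=
  (chebT s).eval (omega0 s η) / (Polynomial.derivative (chebT s)).eval (omega0 s η)

/-- `α_s(η) = 1 / T_s(ω₀)`. -/
def alphaS (s : ℕ) (η : ℝ) : ℝ := ((chebT s).eval (omega0 s η))⁻¹

/-- The stability polynomial `R_s(z) = T_s(ω₀ + ω₁ z) / T_s(ω₀)`. -/
def RsPoly (s : ℕ) (η : ℝ) : Polynomial ℝ :=
  Polynomial.C (alphaS s η) *
    (chebT s).comp (Polynomial.C (omega0 s η) + Polynomial.C (omega1 s η) * Polynomial.X)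

/-- The polynomial `B_s` with `ζ · B_s(ζ) = R_s(ζ) − 1`. -/
def BsPoly (s : ℕ) (η : ℝ) : Polynomial ℝ := (RsPoly s η - 1) /ₘ Polynomial.X

/-- The ESGD stage number `s = ⌈√((κ−1)η/2)⌉`. -/
def stages (κ η : ℝ) : ℕ := ⌈Real.sqrt ((κ - 1) * η / 2)⌉₊

/-- The ESGD step size `h = (ω₀ − 1)/(ω₁ ℓ)`. -/
def stepSize (κ η ℓ : ℝ) : ℝ :=
  (omega0 (stages κ η) η - 1) / (omega1 (stages κ η) η * ℓ)

/-- The constant `C(η) = ω₁ α_s(η) / (ω₀ − 1)`. -/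
def Ceta (s : ℕ) (η : ℝ) : ℝ := omega1 s η * alphaS s η / (omega0 s η - 1)

end

open Polynomial Polynomial.Chebyshev Real

namespace BsAux

/-- Sum of `cosh ((s-1-2k) t)` for `k < s`. -/
noncomputable def S (s : ℕ) (t : ℝ) : ℝ :=
  ∑ k ∈ Finset.range s, Real.cosh (((s : ℝ) - 1 - 2 * k) * t)

lemma sinh_mul_S (s : ℕ) (t : ℝ) : Real.sinh t * S s t = Real.sinh (s * t) := by
  have h : ∀ k ∈ Finset.range s, Real.sinh t * Real.cosh (((s : ℝ) - 1 - 2 * k) * t)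
      = (fun k : ℕ => Real.sinh (((s : ℝ) - 2 * k) * t) / 2) k
        - (fun k : ℕ => Real.sinh (((s : ℝ) - 2 * k) * t) / 2) (k + 1) := by
    intro k _
    have h1 := Real.sinh_add (((s : ℝ) - 1 - 2 * k) * t) t
    have h2 := Real.sinh_sub (((s : ℝ) - 1 - 2 * k) * t) t
    have e1 : ((s : ℝ) - 1 - 2 * k) * t + t = ((s : ℝ) - 2 * k) * t := by ring
    have e2 : ((s : ℝ) - 1 - 2 * k) * t - t = ((s : ℝ) - 2 * ((k : ℝ) + 1)) * t := by ring
    rw [e1] at h1; rw [e2] at h2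
    simp only []
    push_cast
    linarith [h1, h2]
  rw [S, Finset.mul_sum, Finset.sum_congr rfl h,
    Finset.sum_range_sub' (fun k : ℕ => Real.sinh (((s : ℝ) - 2 * k) * t) / 2) s]
  have e0 : ((s : ℝ) - 2 * ((0 : ℕ) : ℝ)) * t = (s : ℝ) * t := by push_cast; ring
  have es : ((s : ℝ) - 2 * ((s : ℕ) : ℝ)) * t = -((s : ℝ) * t) := by push_cast; ring
  rw [e0, es, Real.sinh_neg]
  ring

lemma S_ge (s : ℕ) (t : ℝ) : (s : ℝ) ≤ S s t := by
  calc (s : ℝ) = ∑ _k ∈ Finset.range s, (1 : ℝ) := by simp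
  _ ≤ S s t := Finset.sum_le_sum fun k _ => Real.one_le_cosh _

lemma S_mono (s : ℕ) {t u : ℝ} (ht : 0 ≤ t) (htu : t ≤ u) : S s t ≤ S s u := by
  refine Finset.sum_le_sum fun k _ => ?_
  rw [Real.cosh_le_cosh, abs_mul, abs_mul]
  exact mul_le_mul_of_nonneg_left (by rw [abs_of_nonneg ht, abs_of_nonneg (ht.trans htu)]; exact htu) (abs_nonneg _)

lemma T_cosh (n : ℤ) (t : ℝ) :
    (Polynomial.Chebyshev.T ℝ n).eval (Real.cosh t) = Real.cosh ((n : ℝ) * t) := by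
  have h := Polynomial.Chebyshev.T_complex_cos ((t : ℂ) * Complex.I) n
  rw [Complex.cos_mul_I] at h
  have e : (n : ℂ) * ((t : ℂ) * Complex.I) = (((n : ℝ) * t : ℝ) : ℂ) * Complex.I := by
    push_cast; ring
  rw [e, Complex.cos_mul_I] at h
  rw [← Complex.ofReal_cosh, ← Complex.ofReal_cosh] at h
  exact_mod_cast h

lemma U_cosh (n : ℤ) (t : ℝ) :
    (Polynomial.Chebyshev.U ℝ n).eval (Real.cosh t) * Real.sinh t
      = Real.sinh (((n : ℝ) + 1) * t) := by
  have h := Polynomial.Chebyshev.U_complex_cos ((t : ℂ) * Complex.I) n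
  rw [Complex.cos_mul_I] at h
  have e : ((n : ℂ) + 1) * ((t : ℂ) * Complex.I) = ((((n : ℝ) + 1) * t : ℝ) : ℂ) * Complex.I := by
    push_cast; ring
  rw [e, Complex.sin_mul_I, Complex.sin_mul_I, ← mul_assoc] at h
  have h' := mul_right_cancel₀ Complex.I_ne_zero h
  rw [← Complex.ofReal_cosh, ← Complex.ofReal_sinh, ← Complex.ofReal_sinh] at h'
  exact_mod_cast h'

lemma abs_sin_nat_mul (n : ℕ) (θ : ℝ) : |Real.sin ((n : ℝ) * θ)| ≤ (n : ℝ) * |Real.sin θ| := by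
  induction n with
  | zero => simp
  | succ n ih =>
    have e : (((n : ℕ) + 1 : ℕ) : ℝ) * θ = (n : ℝ) * θ + θ := by push_cast; ring
    rw [e, Real.sin_add]
    calc |Real.sin ((n:ℝ)*θ) * Real.cos θ + Real.cos ((n:ℝ)*θ) * Real.sin θ|
        ≤ |Real.sin ((n:ℝ)*θ) * Real.cos θ| + |Real.cos ((n:ℝ)*θ) * Real.sin θ| := abs_add_le _ _
      _ ≤ (n : ℝ) * |Real.sin θ| + 1 * |Real.sin θ| := by
          rw [abs_mul, abs_mul]
          have h1 : |Real.sin ((n:ℝ)*θ)| * |Real.cos θ| ≤ (n:ℝ) * |Real.sin θ| := by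
            nlinarith [Real.abs_cos_le_one θ, abs_nonneg (Real.sin ((n:ℝ)*θ)), ih,
              abs_nonneg (Real.sin θ), Nat.cast_nonneg (α := ℝ) n]
          have h2 : |Real.cos ((n:ℝ)*θ)| * |Real.sin θ| ≤ 1 * |Real.sin θ| :=
            mul_le_mul_of_nonneg_right (Real.abs_cos_le_one _) (abs_nonneg _)
          linarith
      _ = (((n : ℕ) + 1 : ℕ) : ℝ) * |Real.sin θ| := by push_cast; ring

/-- parametrization of `[1, ∞)` by `cosh`. -/
noncomputable def tof (x : ℝ) : ℝ := Real.arsinh (Real.sqrt (x ^ 2 - 1))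

lemma tof_nonneg {x : ℝ} : 0 ≤ tof x := Real.arsinh_nonneg_iff.2 (Real.sqrt_nonneg _)

lemma tof_pos {x : ℝ} (hx : 1 < x) : 0 < tof x := by
  apply Real.arsinh_pos_iff.2
  apply Real.sqrt_pos.2
  nlinarith

lemma tof_mono {x y : ℝ} (hx : 1 ≤ x) (hxy : x ≤ y) : tof x ≤ tof y := by
  apply Real.arsinh_le_arsinh.2
  apply Real.sqrt_le_sqrt
  nlinarith

lemma cosh_tof {x : ℝ} (hx : 1 ≤ x) : Real.cosh (tof x) = x := by
  have h1 : (0 : ℝ) ≤ x ^ 2 - 1 := by nlinarith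
  have hc : Real.cosh (tof x) ^ 2 = x ^ 2 := by
    rw [Real.cosh_sq, tof, Real.sinh_arsinh, Real.sq_sqrt h1]; ring
  have h2 : Real.cosh (tof x) = |x| := by
    rw [← Real.sqrt_sq (Real.cosh_pos (x := tof x)).le, hc, Real.sqrt_sq_eq_abs]
  rw [h2, abs_of_nonneg (by linarith)]


lemma U_eq_S (s : ℕ) {t : ℝ} (ht : 0 < t) :
    (U ℝ ((s:ℤ) - 1)).eval (Real.cosh t) = S s t := by
  have h := U_cosh ((s:ℤ)-1) t
  have e : ((((s:ℤ) - 1 : ℤ)) : ℝ) + 1 = (s : ℝ) := by push_cast; ring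
  rw [e] at h
  have h2 := sinh_mul_S s t
  have hsinh : Real.sinh t ≠ 0 := ne_of_gt (by rwa [Real.sinh_pos_iff])
  have := h.trans h2.symm
  exact mul_right_cancel₀ hsinh (by linarith [this])

lemma U_le_of_mem (s : ℕ) (hs : 1 ≤ s) {a : ℝ} (ha : 1 < a) {x : ℝ}
    (hx : x ∈ Set.Icc (-1 : ℝ) a) :
    (U ℝ ((s:ℤ) - 1)).eval x ≤ (U ℝ ((s:ℤ) - 1)).eval a := by
  have hτpos : 0 < tof a := tof_pos ha
  have hcosh : Real.cosh (tof a) = a := cosh_tof ha.le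
  have hUa : (U ℝ ((s:ℤ)-1)).eval a = S s (tof a) := by
    conv_lhs => rw [← hcosh]
    rw [U_eq_S s hτpos]
  have hsS : (s : ℝ) ≤ (U ℝ ((s:ℤ)-1)).eval a := hUa ▸ S_ge s (tof a)
  have hclosed : IsClosed {y : ℝ | (U ℝ ((s:ℤ)-1)).eval y ≤ (U ℝ ((s:ℤ)-1)).eval a} :=
    isClosed_le (Polynomial.continuous _) continuous_const
  have hIoo : Set.Ioo (-1 : ℝ) 1 ⊆
      {y : ℝ | (U ℝ ((s:ℤ)-1)).eval y ≤ (U ℝ ((s:ℤ)-1)).eval a} := by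
    intro y hy
    have hθpos : 0 < Real.arccos y := Real.arccos_pos.2 hy.2
    have hθlt : Real.arccos y < Real.pi :=
      lt_of_le_of_ne (Real.arccos_le_pi y)
        (fun h => absurd (Real.arccos_eq_pi.1 h) (by linarith [hy.1]))
    have hsin : 0 < Real.sin (Real.arccos y) := Real.sin_pos_of_pos_of_lt_pi hθpos hθlt
    have h := Polynomial.Chebyshev.U_real_cos (Real.arccos y) ((s:ℤ)-1)
    rw [Real.cos_arccos hy.1.le hy.2.le] at h
    have e : ((((s:ℤ) - 1 : ℤ)) : ℝ) + 1 = (s : ℝ) := by push_cast; ring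
    rw [e] at h
    have habs := abs_sin_nat_mul s (Real.arccos y)
    rw [abs_of_pos hsin] at habs
    have h1 : (U ℝ ((s:ℤ)-1)).eval y * Real.sin (Real.arccos y)
        ≤ (s : ℝ) * Real.sin (Real.arccos y) := by
      rw [h]
      exact (le_abs_self _).trans habs
    have h2 : (U ℝ ((s:ℤ)-1)).eval y ≤ (s : ℝ) := le_of_mul_le_mul_right h1 hsin
    exact h2.trans hsS
  have hIoc : Set.Ioc (1 : ℝ) a ⊆
      {y : ℝ | (U ℝ ((s:ℤ)-1)).eval y ≤ (U ℝ ((s:ℤ)-1)).eval a} := by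
    intro y hy
    have htpos : 0 < tof y := tof_pos hy.1
    have hcy : Real.cosh (tof y) = y := cosh_tof hy.1.le
    have : (U ℝ ((s:ℤ)-1)).eval y = S s (tof y) := by
      conv_lhs => rw [← hcy]
      rw [U_eq_S s htpos]
    rw [Set.mem_setOf_eq, this, hUa]
    exact S_mono s tof_nonneg (tof_mono hy.1.le hy.2)
  have hsub : Set.Icc (-1:ℝ) a ⊆ closure (Set.Ioo (-1:ℝ) 1 ∪ Set.Ioc 1 a) := by
    rw [← Set.Icc_union_Icc_eq_Icc (by norm_num : (-1:ℝ) ≤ 1) ha.le]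
    apply Set.union_subset
    · rw [← closure_Ioo (by norm_num : (-1:ℝ) ≠ 1)]
      exact closure_mono Set.subset_union_left
    · rw [← closure_Ioc ha.ne]
      exact closure_mono Set.subset_union_right
  exact hclosed.closure_subset_iff.2 (Set.union_subset hIoo hIoc) (hsub hx)

lemma dT_le_of_mem (s : ℕ) (hs : 1 ≤ s) {a : ℝ} (ha : 1 < a) {x : ℝ}
    (hx : x ∈ Set.Icc (-1 : ℝ) a) :
    (derivative (T ℝ (s:ℤ))).eval x ≤ (derivative (T ℝ (s:ℤ))).eval a := by
  rw [Polynomial.Chebyshev.T_derivative_eq_U]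
  simp only [Polynomial.eval_mul, Polynomial.eval_intCast, Polynomial.eval_natCast,
    Int.cast_natCast]
  exact mul_le_mul_of_nonneg_left (U_le_of_mem s hs ha hx) (by positivity)

lemma tangent_le (s : ℕ) (hs : 1 ≤ s) {a : ℝ} (ha : 1 < a) {x : ℝ}
    (hx : x ∈ Set.Icc (-1 : ℝ) a) :
    (T ℝ (s:ℤ)).eval a + (derivative (T ℝ (s:ℤ))).eval a * (x - a)
      ≤ (T ℝ (s:ℤ)).eval x := by
  set d := (derivative (T ℝ (s:ℤ))).eval a with hd
  have mono : MonotoneOn (fun y => d * y - (T ℝ (s:ℤ)).eval y) (Set.Icc (-1:ℝ) a) := by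
    apply monotoneOn_of_deriv_nonneg (convex_Icc _ _)
    · exact ((continuous_const.mul continuous_id).sub (Polynomial.continuous _)).continuousOn
    · intro y _
      exact (((hasDerivAt_id y).const_mul d).sub
        ((T ℝ (s:ℤ)).hasDerivAt y)).differentiableAt.differentiableWithinAt
    · intro y hy
      rw [interior_Icc] at hy
      have hder : HasDerivAt (fun y => d * y - (T ℝ (s:ℤ)).eval y)
          (d * 1 - (derivative (T ℝ (s:ℤ))).eval y) y :=
        ((hasDerivAt_id y).const_mul d).sub ((T ℝ (s:ℤ)).hasDerivAt y)
      rw [hder.deriv]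
      have := dT_le_of_mem s hs ha (Set.mem_Icc.2 ⟨hy.1.le, hy.2.le⟩)
      linarith
  have hmem : a ∈ Set.Icc (-1:ℝ) a := Set.right_mem_Icc.2 (by linarith)
  have h := mono hx hmem hx.2
  simp only at h
  linarith

lemma T_le_of_mem (s : ℕ) (hs : 1 ≤ s) {a : ℝ} (ha : 1 < a) {x : ℝ}
    (hx : x ∈ Set.Icc (-1 : ℝ) a) :
    (T ℝ (s:ℤ)).eval x ≤ (T ℝ (s:ℤ)).eval a := by
  have hTa : (T ℝ (s:ℤ)).eval a = Real.cosh ((((s:ℤ)):ℝ) * tof a) := by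
    conv_lhs => rw [← cosh_tof ha.le]
    rw [T_cosh]
  rcases le_or_gt x 1 with h1 | h1
  · have hTx : (T ℝ (s:ℤ)).eval x = Real.cos ((((s:ℤ)):ℝ) * Real.arccos x) := by
      conv_lhs => rw [← Real.cos_arccos hx.1 h1]
      rw [Polynomial.Chebyshev.T_real_cos]
    rw [hTx, hTa]
    exact (Real.cos_le_one _).trans (Real.one_le_cosh _)
  · rw [hTa, ← cosh_tof h1.le, T_cosh, Real.cosh_le_cosh, abs_mul, abs_mul]
    exact mul_le_mul_of_nonneg_left
      (by rw [abs_of_nonneg tof_nonneg, abs_of_nonneg tof_nonneg]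
          exact tof_mono h1.le hx.2) (abs_nonneg _)

lemma one_le_T {a : ℝ} (ha : 1 ≤ a) (s : ℕ) : 1 ≤ (T ℝ (s:ℤ)).eval a := by
  conv_rhs => rw [← cosh_tof ha]
  rw [T_cosh]
  exact Real.one_le_cosh _

lemma sq_le_dT (s : ℕ) {a : ℝ} (ha : 1 < a) :
    (s : ℝ) * (s : ℝ) ≤ (derivative (T ℝ (s:ℤ))).eval a := by
  have hcosh : Real.cosh (tof a) = a := cosh_tof ha.le
  rw [Polynomial.Chebyshev.T_derivative_eq_U]
  simp only [Polynomial.eval_mul, Polynomial.eval_intCast, Polynomial.eval_natCast,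
    Int.cast_natCast]
  have : (U ℝ ((s:ℤ)-1)).eval a = S s (tof a) := by
    conv_lhs => rw [← hcosh]
    rw [U_eq_S s (tof_pos ha)]
  rw [this]
  exact mul_le_mul_of_nonneg_left (S_ge s _) (by positivity)

end BsAux

theorem bs_abs_max_eq_one (s : ℕ) (hs : 1 ≤ s) (η : ℝ) (hη : 0 < η) :
    IsGreatest ((fun ξ => |(BsPoly s η).eval ξ|) ''
        Set.Icc (-((1 + omega0 s η) / omega1 s η)) 0) 1 ∧
      ∀ ξ ∈ Set.Icc (-((1 + omega0 s η) / omega1 s η)) (0 : ℝ),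
        |(BsPoly s η).eval ξ| ≤ 1 := by
  have hspos : (0:ℝ) < (s:ℝ) := by exact_mod_cast hs
  have ha : 1 < omega0 s η := by
    rw [omega0]
    have : 0 < η / (s:ℝ)^2 := div_pos hη (by positivity)
    linarith
  set a := omega0 s η with ha_def
  set c := (chebT s).eval a with hc_def
  set d := (Polynomial.derivative (chebT s)).eval a with hd_def
  have hc1 : 1 ≤ c := BsAux.one_le_T ha.le s
  have hd1 : (s:ℝ) * (s:ℝ) ≤ d := BsAux.sq_le_dT s ha
  have hcpos : 0 < c := by linarith
  have hdpos : 0 < d := by nlinarith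
  have hw : omega1 s η = c / d := rfl
  have hwpos : 0 < omega1 s η := by rw [hw]; positivity
  set w := omega1 s η with hw_def
  set L := (1 + a) / w with hL_def
  have hapos : 0 < a := by linarith
  have hLpos : 0 < L := by rw [hL_def]; positivity
  have hReval : ∀ ξ : ℝ, (RsPoly s η).eval ξ = alphaS s η * (chebT s).eval (a + w * ξ) := by
    intro ξ
    simp [RsPoly, Polynomial.eval_comp]
    exact Or.inl rfl
  have hα : alphaS s η = c⁻¹ := rfl
  have hαpos : 0 < alphaS s η := by rw [hα]; positivity
  have hαc : alphaS s η * c = 1 := by rw [hα]; exact inv_mul_cancel₀ hcpos.ne'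
  have key : ∀ ξ ∈ Set.Icc (-L) (0:ℝ), |(RsPoly s η).eval ξ - 1| ≤ -ξ := by
    intro ξ hξ
    set x := a + w * ξ with hx_def
    have hx2 : x ≤ a := by nlinarith [hξ.2, hwpos]
    have hwL : w * L = 1 + a := by
      rw [hL_def]
      field_simp
    have hx1 : -1 ≤ x := by nlinarith [hξ.1]
    have hmem : x ∈ Set.Icc (-1:ℝ) a := ⟨hx1, hx2⟩
    have hTle : (chebT s).eval x ≤ c := BsAux.T_le_of_mem s hs ha hmem
    have hTge : c + d * (x - a) ≤ (chebT s).eval x := BsAux.tangent_le s hs ha hmem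
    rw [hReval ξ]
    have hupper : alphaS s η * (chebT s).eval x - 1 ≤ 0 := by
      have h := mul_le_mul_of_nonneg_left hTle hαpos.le
      linarith [hαc]
    have hEq : alphaS s η * (c + d * (x - a)) = 1 + ξ := by
      rw [hα, hx_def, hw]
      field_simp
      ring
    have hlower : ξ ≤ alphaS s η * (chebT s).eval x - 1 := by
      have h := mul_le_mul_of_nonneg_left hTge hαpos.le
      linarith [hEq]
    rw [abs_le]
    constructor <;> linarith [hξ.2]
  have h0 : (RsPoly s η - 1).eval 0 = 0 := by
    rw [Polynomial.eval_sub, Polynomial.eval_one, hReval 0]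
    rw [mul_zero, add_zero]
    rw [← hc_def, hαc]
    ring
  have hXB : Polynomial.X * BsPoly s η = RsPoly s η - 1 := by
    have h := Polynomial.modByMonic_add_div (RsPoly s η - 1) Polynomial.X
    rw [Polynomial.modByMonic_X, h0, Polynomial.C_0, zero_add] at h
    unfold BsPoly
    exact h
  have hB0 : (BsPoly s η).eval 0 = 1 := by
    have hder := congrArg Polynomial.derivative hXB
    rw [Polynomial.derivative_mul, Polynomial.derivative_X, one_mul,
      Polynomial.derivative_sub, Polynomial.derivative_one, sub_zero] at hder
    have hev := congrArg (Polynomial.eval 0) hder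
    rw [Polynomial.eval_add, Polynomial.eval_mul, Polynomial.eval_X, zero_mul, add_zero] at hev
    rw [hev]
    unfold RsPoly
    rw [Polynomial.derivative_mul, Polynomial.derivative_C, zero_mul,
      Polynomial.derivative_comp]
    simp only [Polynomial.eval_add, Polynomial.eval_mul, Polynomial.eval_comp,
      Polynomial.eval_C, Polynomial.eval_X, Polynomial.derivative_add,
      Polynomial.derivative_C, Polynomial.derivative_C_mul, Polynomial.derivative_X,
      mul_one, mul_zero, add_zero, zero_add, zero_mul]
    rw [← ha_def, ← hw_def, ← hd_def, hα, hw]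
    field_simp
  have main : ∀ ξ ∈ Set.Icc (-L) (0:ℝ), |(BsPoly s η).eval ξ| ≤ 1 := by
    intro ξ hξ
    rcases eq_or_ne ξ 0 with rfl | hne
    · rw [hB0]; norm_num
    · have hξneg : ξ < 0 := lt_of_le_of_ne hξ.2 hne
      have h1 : ξ * (BsPoly s η).eval ξ = (RsPoly s η).eval ξ - 1 := by
        have h := congrArg (Polynomial.eval ξ) hXB
        simpa using h
      have h2 := key ξ hξ
      rw [← h1, abs_mul, abs_of_neg hξneg] at h2
      have hpos : 0 < -ξ := by linarith
      have : -ξ * |(BsPoly s η).eval ξ| ≤ -ξ * 1 := by linarith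
      exact le_of_mul_le_mul_left this hpos
  refine ⟨⟨⟨0, ⟨by linarith, le_refl 0⟩, ?_⟩, ?_⟩, main⟩
  · simp [hB0]
  · rintro y ⟨ξ, hξ, rfl⟩
    exact main ξ hξ
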